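/- The function A(x,t) = e^{i·t²/10} · e^{(1+i)x - t³/3} / (1 + (1/4)·e^{2x - 2t³/3}) satisfies i·A_t + (t²/2)·A_xx + (t/5)·A + t²·|A|²·A = 0 for all (x,t) ∈ ℝ². -/

import Mathlib

open Complex

lemma vcNLS_key (u p R T : ℂ) (hQ : (1:ℂ) + 1/4*R ≠ 0) :
    Complex.I * (((Complex.I * T/5 * u * p + u * (-T^2 * p)) * (1 + 1/4*R)
        - u * p * (-T^2/2 * R)) / (1 + 1/4*R)^2)
      + T^2/2 * (u * p * ((2*Complex.I * (1 + 1/4*R) - R) * (1 + 1/4*R)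
        - ((1+Complex.I) * (1 + 1/4*R) - 1/2*R) * R) / (1 + 1/4*R)^3)
      + T/5 * (u * p / (1 + 1/4*R))
      + T^2 * (R / (1 + 1/4*R)^2) * (u * p / (1 + 1/4*R)) = 0 := by
  set Q : ℂ := 1 + 1/4*R with hQdef
  have up2 : ∀ a : ℂ, a / Q^2 = a*Q/Q^3 := fun a => by
    rw [pow_succ]; exact (mul_div_mul_right a (Q^2) hQ).symm
  have up1 : ∀ a : ℂ, a / Q = a*Q^2/Q^3 := fun a => by
    rw [show Q^3 = Q * Q^2 by ring]
    exact (mul_div_mul_right a Q (pow_ne_zero 2 hQ)).symm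
  simp only [← mul_div_assoc]
  rw [show T^2*R/Q^2*(u*p)/Q = T^2*R*(u*p)/Q^3 by
    rw [div_mul_eq_mul_div, div_div, ← pow_succ]]
  simp only [up2]
  simp only [up1]
  rw [← add_div, ← add_div, ← add_div, div_eq_zero_iff]
  left
  rw [hQdef]
  linear_combination (T/5*u*p*((1:ℂ)+1/4*R)^2) * Complex.I_sq

set_option maxHeartbeats 1000000 in
/-- The one-soliton solution of the vcNLS equation with quadratic coefficients
`α(t) = t²/2`, `β(t) = t/5`, `γ(t) = t²`. -/
theorem vcNLS_soliton_quadratic_coefficients :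
    let A : ℝ → ℝ → ℂ := fun x t =>
      Complex.exp (Complex.I * (t : ℂ) ^ 2 / 10) *
        Complex.exp ((1 + Complex.I) * (x : ℂ) - (t : ℂ) ^ 3 / 3) /
        (1 + (1 / 4) * Complex.exp (2 * (x : ℂ) - 2 * (t : ℂ) ^ 3 / 3))
    ∀ x t : ℝ,
      Complex.I * deriv (fun τ => A x τ) t
        + ((t ^ 2 / 2 : ℝ) : ℂ) * deriv (deriv (fun y => A y t)) x
        + ((t / 5 : ℝ) : ℂ) * A x t
        + ((t ^ 2 : ℝ) : ℂ) * (‖A x t‖ : ℂ) ^ 2 * A x t = 0 := by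
  intro A x t
  simp only [A]
  set r : ℝ := Real.exp (2*x - 2*t^3/3) with hr
  have hrpos : 0 < r := Real.exp_pos _
  have hE : ∀ y : ℝ, Complex.exp (2*(y:ℂ) - 2*(t:ℂ)^3/3)
      = ((Real.exp (2*y - 2*t^3/3) : ℝ) : ℂ) := by
    intro y; rw [Complex.ofReal_exp]; congr 1; push_cast; ring
  have hden : ∀ y : ℝ, (1:ℂ) + (1/4)*Complex.exp (2*(y:ℂ) - 2*(t:ℂ)^3/3) ≠ 0 := by
    intro y
    rw [hE y]
    have h : (1:ℂ) + (1/4)*((Real.exp (2*y - 2*t^3/3) : ℝ) : ℂ)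
        = ((1 + (1/4)*Real.exp (2*y - 2*t^3/3) : ℝ) : ℂ) := by
      simp [Complex.ofReal_add, Complex.ofReal_mul]
    rw [h]
    exact Complex.ofReal_ne_zero.mpr (by positivity)
  -- time derivative
  have ht1 : HasDerivAt (fun z : ℂ => Complex.exp (Complex.I * z ^ 2 / 10))
      (Complex.I * (t:ℂ)/5 * Complex.exp (Complex.I*(t:ℂ)^2/10)) (t:ℂ) := by
    have h := (((hasDerivAt_pow 2 ((t:ℂ))).const_mul Complex.I).div_const 10).cexp
    exact h.congr_deriv (by ring)
  have ht2 : HasDerivAt (fun z : ℂ => Complex.exp ((1+Complex.I)*(x:ℂ) - z^3/3))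
      (-(t:ℂ)^2 * Complex.exp ((1+Complex.I)*(x:ℂ) - (t:ℂ)^3/3)) (t:ℂ) := by
    have h := ((hasDerivAt_const ((t:ℂ)) ((1+Complex.I)*(x:ℂ))).sub
      ((hasDerivAt_pow 3 ((t:ℂ))).div_const 3)).cexp
    exact h.congr_deriv (by simp only [Pi.sub_apply]; ring)
  have ht3 : HasDerivAt (fun z : ℂ => 1 + (1/4)*Complex.exp (2*(x:ℂ) - 2*z^3/3))
      (-(t:ℂ)^2/2 * Complex.exp (2*(x:ℂ) - 2*(t:ℂ)^3/3)) (t:ℂ) := by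
    have h := ((((hasDerivAt_const ((t:ℂ)) (2*(x:ℂ))).sub
      (((hasDerivAt_pow 3 ((t:ℂ))).const_mul 2).div_const 3)).cexp.const_mul
      (1/4)).const_add 1)
    exact h.congr_deriv (by simp only [Pi.sub_apply]; ring)
  have hT : HasDerivAt (fun τ : ℝ =>
      Complex.exp (Complex.I * (τ : ℂ) ^ 2 / 10) *
        Complex.exp ((1 + Complex.I) * (x : ℂ) - (τ : ℂ) ^ 3 / 3) /
        (1 + (1 / 4) * Complex.exp (2 * (x : ℂ) - 2 * (τ : ℂ) ^ 3 / 3)))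
      (((Complex.I * (t:ℂ)/5 * Complex.exp (Complex.I*(t:ℂ)^2/10) *
          Complex.exp ((1+Complex.I)*(x:ℂ) - (t:ℂ)^3/3) +
         Complex.exp (Complex.I*(t:ℂ)^2/10) *
          (-(t:ℂ)^2 * Complex.exp ((1+Complex.I)*(x:ℂ) - (t:ℂ)^3/3))) *
          (1 + (1/4)*Complex.exp (2*(x:ℂ) - 2*(t:ℂ)^3/3)) -
        Complex.exp (Complex.I*(t:ℂ)^2/10) *
          Complex.exp ((1+Complex.I)*(x:ℂ) - (t:ℂ)^3/3) *
          (-(t:ℂ)^2/2 * Complex.exp (2*(x:ℂ) - 2*(t:ℂ)^3/3))) /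
        (1 + (1/4)*Complex.exp (2*(x:ℂ) - 2*(t:ℂ)^3/3))^2) t :=
    (((ht1.mul ht2).div ht3 (hden x))).comp_ofReal
  -- first spatial derivative, at every point y
  have hG1 : ∀ y : ℝ, HasDerivAt (fun y' : ℝ =>
      Complex.exp (Complex.I * (t : ℂ) ^ 2 / 10) *
        Complex.exp ((1 + Complex.I) * (y' : ℂ) - (t : ℂ) ^ 3 / 3) /
        (1 + (1 / 4) * Complex.exp (2 * (y' : ℂ) - 2 * (t : ℂ) ^ 3 / 3)))
      (Complex.exp (Complex.I * (t : ℂ) ^ 2 / 10) *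
        Complex.exp ((1 + Complex.I) * (y : ℂ) - (t : ℂ) ^ 3 / 3) *
        ((1+Complex.I) * (1 + (1/4)*Complex.exp (2*(y:ℂ) - 2*(t:ℂ)^3/3))
          - (1/2)*Complex.exp (2*(y:ℂ) - 2*(t:ℂ)^3/3)) /
        (1 + (1/4)*Complex.exp (2*(y:ℂ) - 2*(t:ℂ)^3/3))^2) y := by
    intro y
    have hp : HasDerivAt (fun z : ℂ => Complex.exp ((1+Complex.I)*z - (t:ℂ)^3/3))
        ((1+Complex.I) * Complex.exp ((1+Complex.I)*(y:ℂ) - (t:ℂ)^3/3)) (y:ℂ) := by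
      have h := (((hasDerivAt_id' (𝕜 := ℂ) ((y:ℂ))).const_mul (1+Complex.I)).sub_const
        ((t:ℂ)^3/3)).cexp
      exact h.congr_deriv (by ring)
    have he : HasDerivAt (fun z : ℂ => 1 + (1/4)*Complex.exp (2*z - 2*(t:ℂ)^3/3))
        ((1/2) * Complex.exp (2*(y:ℂ) - 2*(t:ℂ)^3/3)) (y:ℂ) := by
      have h := ((((hasDerivAt_id' (𝕜 := ℂ) ((y:ℂ))).const_mul 2).sub_const
        (2*(t:ℂ)^3/3)).cexp.const_mul (1/4)).const_add 1
      exact h.congr_deriv (by ring)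
    have h := ((hp.const_mul (Complex.exp (Complex.I * (t:ℂ)^2/10))).div he
      (hden y)).comp_ofReal
    refine h.congr_deriv ?_
    symm
    field_simp
  have hd1 : (deriv fun y : ℝ =>
      Complex.exp (Complex.I * (t : ℂ) ^ 2 / 10) *
        Complex.exp ((1 + Complex.I) * (y : ℂ) - (t : ℂ) ^ 3 / 3) /
        (1 + (1 / 4) * Complex.exp (2 * (y : ℂ) - 2 * (t : ℂ) ^ 3 / 3)))
      = fun y : ℝ =>
      Complex.exp (Complex.I * (t : ℂ) ^ 2 / 10) *
        Complex.exp ((1 + Complex.I) * (y : ℂ) - (t : ℂ) ^ 3 / 3) *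
        ((1+Complex.I) * (1 + (1/4)*Complex.exp (2*(y:ℂ) - 2*(t:ℂ)^3/3))
          - (1/2)*Complex.exp (2*(y:ℂ) - 2*(t:ℂ)^3/3)) /
        (1 + (1/4)*Complex.exp (2*(y:ℂ) - 2*(t:ℂ)^3/3))^2 :=
    funext fun y => (hG1 y).deriv
  -- second spatial derivative
  have hX2 : HasDerivAt (fun y : ℝ =>
      Complex.exp (Complex.I * (t : ℂ) ^ 2 / 10) *
        Complex.exp ((1 + Complex.I) * (y : ℂ) - (t : ℂ) ^ 3 / 3) *
        ((1+Complex.I) * (1 + (1/4)*Complex.exp (2*(y:ℂ) - 2*(t:ℂ)^3/3))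
          - (1/2)*Complex.exp (2*(y:ℂ) - 2*(t:ℂ)^3/3)) /
        (1 + (1/4)*Complex.exp (2*(y:ℂ) - 2*(t:ℂ)^3/3))^2)
      (Complex.exp (Complex.I * (t : ℂ) ^ 2 / 10) *
        Complex.exp ((1 + Complex.I) * (x : ℂ) - (t : ℂ) ^ 3 / 3) *
        ((2*Complex.I * (1 + (1/4)*Complex.exp (2*(x:ℂ) - 2*(t:ℂ)^3/3))
            - Complex.exp (2*(x:ℂ) - 2*(t:ℂ)^3/3)) *
           (1 + (1/4)*Complex.exp (2*(x:ℂ) - 2*(t:ℂ)^3/3))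
         - ((1+Complex.I) * (1 + (1/4)*Complex.exp (2*(x:ℂ) - 2*(t:ℂ)^3/3))
            - (1/2)*Complex.exp (2*(x:ℂ) - 2*(t:ℂ)^3/3)) *
           Complex.exp (2*(x:ℂ) - 2*(t:ℂ)^3/3)) /
        (1 + (1/4)*Complex.exp (2*(x:ℂ) - 2*(t:ℂ)^3/3))^3) x := by
    have hp : HasDerivAt (fun z : ℂ => Complex.exp ((1+Complex.I)*z - (t:ℂ)^3/3))
        ((1+Complex.I) * Complex.exp ((1+Complex.I)*(x:ℂ) - (t:ℂ)^3/3)) (x:ℂ) := by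
      have h := (((hasDerivAt_id' (𝕜 := ℂ) ((x:ℂ))).const_mul (1+Complex.I)).sub_const
        ((t:ℂ)^3/3)).cexp
      exact h.congr_deriv (by ring)
    have he2 : HasDerivAt (fun z : ℂ => Complex.exp (2*z - 2*(t:ℂ)^3/3))
        (2 * Complex.exp (2*(x:ℂ) - 2*(t:ℂ)^3/3)) (x:ℂ) := by
      have h := (((hasDerivAt_id' (𝕜 := ℂ) ((x:ℂ))).const_mul 2).sub_const
        (2*(t:ℂ)^3/3)).cexp
      exact h.congr_deriv (by ring)
    have hq1 : HasDerivAt (fun z : ℂ => 1 + (1/4)*Complex.exp (2*z - 2*(t:ℂ)^3/3))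
        ((1/2) * Complex.exp (2*(x:ℂ) - 2*(t:ℂ)^3/3)) (x:ℂ) := by
      have h := (he2.const_mul (1/4)).const_add 1
      exact h.congr_deriv (by ring)
    have hB : HasDerivAt (fun z : ℂ =>
        (1+Complex.I) * (1 + (1/4)*Complex.exp (2*z - 2*(t:ℂ)^3/3))
          - (1/2)*Complex.exp (2*z - 2*(t:ℂ)^3/3))
        ((1+Complex.I) * ((1/2) * Complex.exp (2*(x:ℂ) - 2*(t:ℂ)^3/3))
          - Complex.exp (2*(x:ℂ) - 2*(t:ℂ)^3/3)) (x:ℂ) := by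
      have h := (hq1.const_mul (1+Complex.I)).sub (he2.const_mul (1/2))
      exact h.congr_deriv (by ring)
    have hqq : HasDerivAt (fun z : ℂ =>
        (1 + (1/4)*Complex.exp (2*z - 2*(t:ℂ)^3/3))^2)
        (2 * (1 + (1/4)*Complex.exp (2*(x:ℂ) - 2*(t:ℂ)^3/3)) *
          ((1/2) * Complex.exp (2*(x:ℂ) - 2*(t:ℂ)^3/3))) (x:ℂ) := by
      have h := hq1.pow 2
      exact h.congr_deriv (by ring)
    have hden2 : ((1 + (1/4)*Complex.exp (2*(x:ℂ) - 2*(t:ℂ)^3/3))^2) ≠ 0 :=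
      pow_ne_zero 2 (hden x)
    have h := (((hp.const_mul (Complex.exp (Complex.I * (t:ℂ)^2/10))).mul hB).div
      hqq hden2).comp_ofReal
    refine h.congr_deriv ?_
    symm
    simp only [Pi.mul_apply]
    have hI : (Complex.I : ℂ)^2 = -1 := Complex.I_sq
    rw [div_eq_div_iff (pow_ne_zero 3 (hden x)) (pow_ne_zero 2 hden2)]
    linear_combination (-(Complex.exp (Complex.I * (t:ℂ)^2/10) *
      Complex.exp ((1+Complex.I)*(x:ℂ) - (t:ℂ)^3/3) *
      (1 + (1/4)*Complex.exp (2*(x:ℂ) - 2*(t:ℂ)^3/3))^6)) * hI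
  -- the norm
  have hnorm : ‖Complex.exp (Complex.I * (t : ℂ) ^ 2 / 10) *
        Complex.exp ((1 + Complex.I) * (x : ℂ) - (t : ℂ) ^ 3 / 3) /
        (1 + (1 / 4) * Complex.exp (2 * (x : ℂ) - 2 * (t : ℂ) ^ 3 / 3))‖ ^ 2
      = r / (1 + (1/4)*r)^2 := by
    have h1 : (0:ℝ) < 1 + (1/4)*r := by positivity
    have hd : (1:ℂ) + (1/4)*Complex.exp (2*(x:ℂ) - 2*(t:ℂ)^3/3)
        = ((1 + (1/4)*r : ℝ) : ℂ) := by
      rw [hE x, ← hr]; push_cast; ring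
    rw [norm_div, norm_mul, hd, Complex.norm_real]
    rw [Complex.norm_exp, Complex.norm_exp]
    have h2 : (Complex.I * (t:ℂ)^2/10).re = 0 := by
      rw [show Complex.I * (t:ℂ)^2/10 = Complex.I * ((t^2/10 : ℝ):ℂ) by push_cast; ring]
      simp [← Complex.ofReal_pow]
    have h3 : ((1+Complex.I)*(x:ℂ) - (t:ℂ)^3/3).re = x - t^3/3 := by
      rw [show (1+Complex.I)*(x:ℂ) - (t:ℂ)^3/3
          = ((x - t^3/3 : ℝ):ℂ) + ((x:ℝ):ℂ)*Complex.I by push_cast; ring]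
      simp [← Complex.ofReal_pow]
    rw [h2, h3, Real.exp_zero, one_mul, Real.norm_eq_abs, abs_of_pos h1, div_pow]
    congr 1
    rw [sq, ← Real.exp_add, hr]
    congr 1
    ring
  have hnormC : ((‖Complex.exp (Complex.I * (t : ℂ) ^ 2 / 10) *
        Complex.exp ((1 + Complex.I) * (x : ℂ) - (t : ℂ) ^ 3 / 3) /
        (1 + (1 / 4) * Complex.exp (2 * (x : ℂ) - 2 * (t : ℂ) ^ 3 / 3))‖ : ℝ) : ℂ) ^ 2
      = ((r / (1 + (1/4)*r)^2 : ℝ) : ℂ) := by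
    rw [← Complex.ofReal_pow, hnorm]
  rw [hT.deriv, hd1, hX2.deriv, hnormC]
  rw [hE x, ← hr]
  have hQ : (1:ℂ) + 1/4*(r:ℂ) ≠ 0 := by
    have h := hden x
    rw [hE x, ← hr] at h
    convert h using 2
  push_cast
  exact vcNLS_key (Complex.exp (Complex.I * (t:ℂ)^2/10))
    (Complex.exp ((1+Complex.I)*(x:ℂ) - (t:ℂ)^3/3)) (r:ℂ) (t:ℂ) hQ
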